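/- arXiv:2308.14979 — 2 statements merged into one kernel-verified Lean document; each statement's English description precedes it below -/
import Mathlib

section
/- Let P be a finite poset, k a field, and P' a convex full subposet of P. For a persistence module M over P', let M̂ denote its extension by zero to P (M̂(p) = M(p) for p ∈ P' and M̂(p) = 0 otherwise; this is a well-defined persistence module over P since P' is convex). If f : X → M is an interval cover of M over P', then the extension by zero f̂ : X̂ → M̂ is an interval cover of M̂ over P. -/
open CategoryTheory CategoryTheory.Limits

attribute [local instance] CategoryTheory.Limits.HasFiniteBiproducts.of_hasFiniteProducts

section Posets

variable {P : Type} [PartialOrder P]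

/-- Zigzag connectivity of two elements of a subset `S` of a poset: they are linked by a
zigzag of comparable pairs inside `S`. -/
def ZigzagConnIn (S : Set P) (a b : S) : Prop :=
  Relation.ReflTransGen (fun u v : S => (u : P) ≤ v ∨ (v : P) ≤ u) a b

/-- A subset of a poset is convex if `x ≤ z ≤ y` with `x, y` in the subset implies `z` is. -/
def IsConvex (S : Set P) : Prop :=
  ∀ ⦃x y z : P⦄, x ∈ S → y ∈ S → x ≤ z → z ≤ y → z ∈ S

/-- An interval of a poset: a nonempty, convex, zigzag-connected subset. -/
def IsIntervalSet (S : Set P) : Prop :=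
  S.Nonempty ∧ IsConvex S ∧ ∀ a b : S, ZigzagConnIn S a b

end Posets

section IntervalModules

variable (k : Type) [Field k] {P : Type} [PartialOrder P]

open Classical in
/-- The linear map between the fibers of the interval module. -/
noncomputable def intervalModuleAux (S : Set P) (p q : P) :
    ↥(if p ∈ S then (⊤ : Submodule k k) else ⊥) →ₗ[k]
      ↥(if q ∈ S then (⊤ : Submodule k k) else ⊥) where
  toFun x := ⟨(if p ∈ S ∧ q ∈ S then (1 : k) else 0) * x.1, by
    by_cases hq : q ∈ S
    · rw [if_pos hq]; exact Submodule.mem_top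
    · rw [if_neg hq, Submodule.mem_bot]; simp [hq]⟩
  map_add' x y := by ext; simp [mul_add]
  map_smul' c x := by ext; simp

open Classical in
/-- The interval module `k_S` associated to a convex subset `S` of a poset `P`:
it is `k` at points of `S`, `0` elsewhere, with identity structure maps inside `S`. -/
noncomputable def intervalModule (S : Set P) (hS : IsConvex S) : P ⥤ ModuleCat.{0} k where
  obj p := ModuleCat.of k ↥(if p ∈ S then (⊤ : Submodule k k) else ⊥)
  map {p q} _ := ModuleCat.ofHom (intervalModuleAux k S p q)
  map_id p := by
    apply ModuleCat.hom_ext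
    apply LinearMap.ext
    rintro ⟨x, hx⟩
    apply Subtype.ext
    show (if p ∈ S ∧ p ∈ S then (1 : k) else 0) * x = x
    by_cases hp : p ∈ S
    · simp [hp]
    · rw [if_neg hp] at hx
      simp [hp, (Submodule.mem_bot k).mp hx]
  map_comp {p q r} f g := by
    apply ModuleCat.hom_ext
    apply LinearMap.ext
    rintro ⟨x, hx⟩
    apply Subtype.ext
    show (if p ∈ S ∧ r ∈ S then (1 : k) else 0) * x
      = (if q ∈ S ∧ r ∈ S then (1 : k) else 0) * ((if p ∈ S ∧ q ∈ S then (1 : k) else 0) * x)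
    by_cases hp : p ∈ S
    · by_cases hr : r ∈ S
      · have hq : q ∈ S := hS hp hr (leOfHom f) (leOfHom g)
        simp [hp, hq, hr]
      · simp [hr]
    · rw [if_neg hp] at hx
      simp [(Submodule.mem_bot k).mp hx]

/-- A persistence module is an interval module if it is isomorphic to `k_S` for some
interval `S`. -/
def IsIntervalModule (M : P ⥤ ModuleCat.{0} k) : Prop :=
  ∃ (S : Set P) (hS : IsIntervalSet S), Nonempty (M ≅ intervalModule k S hS.2.1)

/-- A persistence module is interval-decomposable if it is isomorphic to a finite direct sum
of interval modules. -/
def IsIntervalDecomposable (M : P ⥤ ModuleCat.{0} k) : Prop :=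
  ∃ (n : ℕ) (J : Fin n → (P ⥤ ModuleCat.{0} k)),
    (∀ i, IsIntervalModule k (J i)) ∧ Nonempty (M ≅ ⨁ J)

/-- The support of a persistence module. -/
def moduleSupport (M : P ⥤ ModuleCat.{0} k) : Set P := {p : P | ¬ IsZero (M.obj p)}

/-- A persistence module valued in finite-dimensional vector spaces. -/
def PointwiseFinite (M : P ⥤ ModuleCat.{0} k) : Prop :=
  ∀ p : P, FiniteDimensional k (M.obj p)

end IntervalModules

section Approximations

variable {C : Type*} [Category C]

/-- `f : X ⟶ M` is a right `𝒳`-approximation of `M` if `X ∈ 𝒳` and every morphism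
from an object of `𝒳` to `M` factors through `f`. -/
def IsRightApproximation (𝒳 : C → Prop) {X M : C} (f : X ⟶ M) : Prop :=
  𝒳 X ∧ ∀ ⦃Y : C⦄ (g : Y ⟶ M), 𝒳 Y → ∃ h : Y ⟶ X, h ≫ f = g

/-- `f : X ⟶ M` is right minimal if every endomorphism `g` of `X` with `f ∘ g = f`
is an isomorphism. -/
def IsRightMinimal {X M : C} (f : X ⟶ M) : Prop :=
  ∀ g : X ⟶ X, g ≫ f = f → IsIso g

end Approximations

/-- An interval cover: a right minimal approximation by interval-decomposable modules. -/
def IsIntervalCover (k : Type) [Field k] {P : Type} [PartialOrder P]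
    {X M : P ⥤ ModuleCat.{0} k} (f : X ⟶ M) : Prop :=
  IsRightApproximation (IsIntervalDecomposable k) f ∧ IsRightMinimal f

section Resolutions

variable {C : Type*} [Category C] [Limits.HasZeroMorphisms C]

/-- `M` admits a resolution `0 ⟶ J_n ⟶ ⋯ ⟶ J_1 ⟶ J_0 ⟶ M ⟶ 0` of length `n` by objects
of `𝒳`: an exact sequence in which every `J_i` lies in `𝒳`.  (The data is encoded by an
`ℕ`-indexed complex which vanishes in degrees `> n` and is exact everywhere.) -/
def HasResolutionOfLength (𝒳 : C → Prop) (n : ℕ) (M : C) : Prop :=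
  ∃ (J : ℕ → C) (d : ∀ i, J (i + 1) ⟶ J i) (f : J 0 ⟶ M) (w0 : d 0 ≫ f = 0)
    (w : ∀ i, d (i + 1) ≫ d i = 0),
    (∀ i, i ≤ n → 𝒳 (J i)) ∧ (∀ i, n < i → IsZero (J i)) ∧
    Epi f ∧ (ShortComplex.mk (d 0) f w0).Exact ∧
    ∀ i, (ShortComplex.mk (d (i + 1)) (d i) (w i)).Exact

end Resolutions

section ExtensionByZero

variable (k : Type) [Field k] {P : Type} [PartialOrder P] (P' : Set P)

open Classical in
/-- Fibers of the extension by zero. -/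
noncomputable def extObj (M : ↥P' ⥤ ModuleCat.{0} k) (p : P) : ModuleCat.{0} k :=
  if h : p ∈ P' then M.obj ⟨p, h⟩ else ModuleCat.of k PUnit

lemma extObj_pos (M : ↥P' ⥤ ModuleCat.{0} k) {p : P} (hp : p ∈ P') :
    extObj k P' M p = M.obj ⟨p, hp⟩ := dif_pos hp

lemma extObj_isZero (M : ↥P' ⥤ ModuleCat.{0} k) {p : P} (hp : p ∉ P') :
    CategoryTheory.Limits.IsZero (extObj k P' M p) := by
  rw [extObj, dif_neg hp]
  exact ModuleCat.isZero_of_subsingleton _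

open Classical in
/-- Structure maps of the extension by zero. -/
noncomputable def extMap (M : ↥P' ⥤ ModuleCat.{0} k) (p q : P) (hpq : p ≤ q) :
    extObj k P' M p ⟶ extObj k P' M q :=
  if hp : p ∈ P' then
    if hq : q ∈ P' then
      eqToHom (extObj_pos k P' M hp) ≫
        M.map (homOfLE (show (⟨p, hp⟩ : ↥P') ≤ ⟨q, hq⟩ from hpq)) ≫
          eqToHom (extObj_pos k P' M hq).symm
    else 0
  else 0

lemma extMap_id (M : ↥P' ⥤ ModuleCat.{0} k) (p : P) (h : p ≤ p) :
    extMap k P' M p p h = 𝟙 (extObj k P' M p) := by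
  by_cases hp : p ∈ P'
  · simp only [extMap, dif_pos hp]
    have : homOfLE (show (⟨p, hp⟩ : ↥P') ≤ ⟨p, hp⟩ from h) = 𝟙 _ := Subsingleton.elim _ _
    rw [this, M.map_id]
    simp
  · simp only [extMap, dif_neg hp]
    exact (extObj_isZero k P' M hp).eq_of_src _ _

lemma extMap_comp (hconv : IsConvex P') (M : ↥P' ⥤ ModuleCat.{0} k) (p q r : P)
    (hpq : p ≤ q) (hqr : q ≤ r) :
    extMap k P' M p r (hpq.trans hqr) = extMap k P' M p q hpq ≫ extMap k P' M q r hqr := by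
  by_cases hp : p ∈ P'
  · by_cases hr : r ∈ P'
    · have hq : q ∈ P' := hconv hp hr hpq hqr
      simp only [extMap, dif_pos hp, dif_pos hq, dif_pos hr]
      have : homOfLE (show (⟨p, hp⟩ : ↥P') ≤ ⟨r, hr⟩ from hpq.trans hqr) =
          homOfLE (show (⟨p, hp⟩ : ↥P') ≤ ⟨q, hq⟩ from hpq) ≫
            homOfLE (show (⟨q, hq⟩ : ↥P') ≤ ⟨r, hr⟩ from hqr) := Subsingleton.elim _ _
      rw [this, M.map_comp]
      simp
    · by_cases hq : q ∈ P'
      · simp only [extMap, dif_pos hp, dif_pos hq, dif_neg hr]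
        simp
      · simp only [extMap, dif_pos hp, dif_neg hq, dif_neg hr]
        simp
  · simp only [extMap, dif_neg hp]
    exact (extObj_isZero k P' M hp).eq_of_src _ _

/-- The extension by zero of a persistence module over a convex full subposet `P'` of `P`:
it agrees with `M` on `P'` and vanishes outside of `P'`. -/
noncomputable def extendByZero (hconv : IsConvex P') (M : ↥P' ⥤ ModuleCat.{0} k) :
    P ⥤ ModuleCat.{0} k where
  obj p := extObj k P' M p
  map {p q} f := extMap k P' M p q (leOfHom f)
  map_id p := extMap_id k P' M p le_rfl
  map_comp {p q r} f g := extMap_comp k P' hconv M p q r (leOfHom f) (leOfHom g)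

open Classical in
/-- The components of the extension by zero of a morphism. -/
noncomputable def extHomApp {X M : ↥P' ⥤ ModuleCat.{0} k} (f : X ⟶ M) (p : P) :
    extObj k P' X p ⟶ extObj k P' M p :=
  if hp : p ∈ P' then
    eqToHom (extObj_pos k P' X hp) ≫ f.app ⟨p, hp⟩ ≫ eqToHom (extObj_pos k P' M hp).symm
  else 0

/-- The extension by zero of a morphism of persistence modules over a convex full
subposet. -/
noncomputable def extendByZeroHom (hconv : IsConvex P') {X M : ↥P' ⥤ ModuleCat.{0} k}
    (f : X ⟶ M) : extendByZero k P' hconv X ⟶ extendByZero k P' hconv M where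
  app p := extHomApp k P' f p
  naturality p q g := by
    show extMap k P' X p q (leOfHom g) ≫ extHomApp k P' f q =
      extHomApp k P' f p ≫ extMap k P' M p q (leOfHom g)
    by_cases hq : q ∈ P'
    · by_cases hp : p ∈ P'
      · simp only [extMap, extHomApp, dif_pos hp, dif_pos hq]
        simp only [CategoryTheory.Category.assoc, CategoryTheory.eqToHom_trans_assoc,
          CategoryTheory.eqToHom_refl, CategoryTheory.Category.id_comp]
        rw [CategoryTheory.NatTrans.naturality_assoc]
      · exact (extObj_isZero k P' X hp).eq_of_src _ _
    · exact ((extObj_isZero k P' M hq).eq_of_tgt _ _)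

end ExtensionByZero

namespace IntervalCoverAux

open CategoryTheory CategoryTheory.Limits

section Helpers

variable (k : Type) [Field k]

open Classical in
/-- A linear map between conditional fibers, given by the indicator of `c ∧ d`. -/
noncomputable def IHomL (c d : Prop) :
    ↥(if c then (⊤ : Submodule k k) else ⊥) →ₗ[k]
      ↥(if d then (⊤ : Submodule k k) else ⊥) where
  toFun x := ⟨(if c ∧ d then (1 : k) else 0) * x.1, by
    by_cases h : d
    · rw [if_pos h]; exact Submodule.mem_top
    · rw [if_neg h, Submodule.mem_bot]; simp [h]⟩
  map_add' x y := by ext; simp [mul_add]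
  map_smul' r x := by ext; simp

open Classical in
/-- The same map, as a morphism in `ModuleCat`. -/
noncomputable def IHomM (c d : Prop) :
    @Quiver.Hom (ModuleCat.{0} k) CategoryStruct.toQuiver
      (ModuleCat.of k ↥(if c then (⊤ : Submodule k k) else ⊥))
      (ModuleCat.of k ↥(if d then (⊤ : Submodule k k) else ⊥)) :=
  ModuleCat.ofHom (IHomL k c d)

open Classical in
lemma IObj_isZero (c : Prop) (h : ¬ c) :
    IsZero (ModuleCat.of k ↥(if c then (⊤ : Submodule k k) else ⊥)) := by
  have this : Subsingleton ↥(if c then (⊤ : Submodule k k) else ⊥) := by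
    rw [if_neg h]; infer_instance
  exact @ModuleCat.isZero_of_subsingleton k _ _ this

open Classical in
lemma elt_zero {c : Prop} (h : ¬ c) (x : ↥(if c then (⊤ : Submodule k k) else ⊥)) :
    x.1 = 0 := by
  obtain ⟨y, hy⟩ := x
  rw [if_neg h] at hy
  exact (Submodule.mem_bot k).mp hy

end Helpers

section IndNat

variable (k : Type) [Field k] {Q : Type} [PartialOrder Q]

open Classical in
/-- An indicator natural transformation between interval modules. -/
noncomputable def indNat (A B : Set Q) (hA : IsConvex A) (hB : IsConvex B)
    (hcond : ∀ p q : Q, p ≤ q → p ∈ A → q ∈ B → (q ∈ A ↔ p ∈ B)) :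
    intervalModule k A hA ⟶ intervalModule k B hB where
  app q := IHomM k (q ∈ A) (q ∈ B)
  naturality p q f := by
    apply ModuleCat.hom_ext
    apply LinearMap.ext
    rintro ⟨x, hx⟩
    apply Subtype.ext
    show (if q ∈ A ∧ q ∈ B then (1 : k) else 0) * ((if p ∈ A ∧ q ∈ A then (1 : k) else 0) * x)
      = (if p ∈ B ∧ q ∈ B then (1 : k) else 0) * ((if p ∈ A ∧ p ∈ B then (1 : k) else 0) * x)
    by_cases hp : p ∈ A
    · by_cases hq : q ∈ B
      · have hiff := hcond p q (leOfHom f) hp hq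
        by_cases hqa : q ∈ A
        · simp [hp, hq, hqa, hiff.mp hqa]
        · have : ¬ p ∈ B := fun hb => hqa (hiff.mpr hb)
          simp [hqa, this]
      · simp [hq]
    · have : x = 0 := elt_zero k hp ⟨x, hx⟩
      simp [this]

@[simp] lemma indNat_app (A B : Set Q) (hA : IsConvex A) (hB : IsConvex B) (hcond) (q : Q) :
    (indNat k A B hA hB hcond).app q = IHomM k (q ∈ A) (q ∈ B) := rfl

end IndNat

section Components

variable {Q : Type} [PartialOrder Q]

lemma zigzag_symm {U : Set Q} :
    Symmetric (fun u v : ↥U => (u : Q) ≤ v ∨ (v : Q) ≤ u) := fun _ _ h => h.symm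

/-- The setoid of zigzag connectivity on a subset. -/
def compRel (U : Set Q) : Setoid ↥U where
  r a b := ZigzagConnIn U a b
  iseqv := ⟨fun _ => Relation.ReflTransGen.refl,
    fun h => ((@Relation.ReflTransGen.symmetric _ _ ⟨zigzag_symm⟩).symm _ _) h,
    fun h1 h2 => Relation.ReflTransGen.trans h1 h2⟩

/-- The zigzag-connected component of a point. -/
def zcomp (U : Set Q) (a : ↥U) : Set Q := {q | ∃ h : q ∈ U, ZigzagConnIn U ⟨q, h⟩ a}

lemma zcomp_subset (U : Set Q) (a : ↥U) : zcomp U a ⊆ U := fun _ hq => hq.1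

lemma self_mem_zcomp (U : Set Q) (a : ↥U) : (a : Q) ∈ zcomp U a :=
  ⟨a.2, Relation.ReflTransGen.refl⟩

lemma zcomp_congr (U : Set Q) (a b : ↥U) (h : ZigzagConnIn U a b) :
    zcomp U a = zcomp U b := by
  ext q
  constructor
  · rintro ⟨hq, hz⟩
    exact ⟨hq, hz.trans h⟩
  · rintro ⟨hq, hz⟩
    exact ⟨hq, hz.trans (((@Relation.ReflTransGen.symmetric _ _ ⟨zigzag_symm⟩).symm _ _) h)⟩

lemma zcomp_step (U : Set Q) (a : ↥U) {p q : Q} (hp : p ∈ U) (hq : q ∈ U)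
    (hle : p ≤ q ∨ q ≤ p) (hpc : p ∈ zcomp U a) : q ∈ zcomp U a :=
  ⟨hq, Relation.ReflTransGen.head (Or.symm hle) hpc.2⟩

lemma zcomp_convex (U : Set Q) (hU : IsConvex U) (a : ↥U) : IsConvex (zcomp U a) := by
  intro x y z hx hy hxz hzy
  have hzU : z ∈ U := hU hx.1 hy.1 hxz hzy
  exact zcomp_step U a hy.1 hzU (Or.inr hzy) hy

lemma zig_in_zcomp (U : Set Q) (a b c : ↥U) (h1 : ZigzagConnIn U b c) :
    ∀ (_ : ZigzagConnIn U c a) (hb : ↑b ∈ zcomp U a) (hc : ↑c ∈ zcomp U a),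
      ZigzagConnIn (zcomp U a) ⟨↑b, hb⟩ ⟨↑c, hc⟩ := by
  induction h1 with
  | refl => intro _ _ _; exact Relation.ReflTransGen.refl
  | @tail c' c h1' hstep ih =>
      intro h2 hb hc
      have hc'c : ZigzagConnIn U c' c := Relation.ReflTransGen.single hstep
      have hc' : ↑c' ∈ zcomp U a := ⟨c'.2, hc'c.trans h2⟩
      exact (ih (hc'c.trans h2) hb hc').tail hstep

lemma zcomp_isInterval (U : Set Q) (hU : IsConvex U) (a : ↥U) :
    IsIntervalSet (zcomp U a) := by
  refine ⟨⟨a, self_mem_zcomp U a⟩, zcomp_convex U hU a, ?_⟩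
  intro x y
  obtain ⟨hxU, hxz⟩ := x.2
  obtain ⟨hyU, hyz⟩ := y.2
  have hpath : ZigzagConnIn U ⟨↑x, hxU⟩ ⟨↑y, hyU⟩ :=
    hxz.trans (((@Relation.ReflTransGen.symmetric _ _ ⟨zigzag_symm⟩).symm _ _) hyz)
  exact zig_in_zcomp U a ⟨↑x, hxU⟩ ⟨↑y, hyU⟩ hpath hyz x.2 y.2

/-- The connected components of a subset, indexed by the quotient. -/
noncomputable def compSet (U : Set Q) (i : Quotient (compRel U)) : Set Q :=
  Quotient.lift (zcomp U) (fun a b h => zcomp_congr U a b h) i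

lemma compSet_subset (U : Set Q) (i : Quotient (compRel U)) : compSet U i ⊆ U :=
  Quotient.inductionOn i (fun a => zcomp_subset U a)

lemma mem_compSet_mk (U : Set Q) {q : Q} (h : q ∈ U) :
    q ∈ compSet U (Quotient.mk (compRel U) ⟨q, h⟩) :=
  self_mem_zcomp U ⟨q, h⟩

lemma compSet_eq_of_mem (U : Set Q) {q : Q} {i j : Quotient (compRel U)}
    (hi : q ∈ compSet U i) (hj : q ∈ compSet U j) : i = j := by
  induction i using Quotient.inductionOn with
  | h a =>
    induction j using Quotient.inductionOn with
    | h b =>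
      obtain ⟨hq, hza⟩ := hi
      obtain ⟨hq', hzb⟩ := hj
      exact Quotient.sound
        ((((@Relation.ReflTransGen.symmetric _ _ ⟨zigzag_symm⟩).symm _ _) hza).trans hzb)

lemma compSet_isInterval (U : Set Q) (hU : IsConvex U) (i : Quotient (compRel U)) :
    IsIntervalSet (compSet U i) :=
  Quotient.inductionOn i (fun a => zcomp_isInterval U hU a)

lemma mem_compSet_step (U : Set Q) {i : Quotient (compRel U)} {p q : Q}
    (hp : p ∈ compSet U i) (hq : q ∈ U) (hle : p ≤ q ∨ q ≤ p) : q ∈ compSet U i := by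
  induction i using Quotient.inductionOn with
  | h a => exact zcomp_step U a (zcomp_subset U a hp) hq hle hp

end Components

section ExtFunctor

variable (k : Type) [Field k] {P : Type} [PartialOrder P] (P' : Set P)

lemma extHomApp_pos {X M : ↥P' ⥤ ModuleCat.{0} k} (f : X ⟶ M) {p : P} (hp : p ∈ P') :
    extHomApp k P' f p =
      eqToHom (extObj_pos k P' X hp) ≫ f.app ⟨p, hp⟩ ≫ eqToHom (extObj_pos k P' M hp).symm := by
  rw [extHomApp, dif_pos hp]

lemma extHomApp_neg {X M : ↥P' ⥤ ModuleCat.{0} k} (f : X ⟶ M) {p : P} (hp : p ∉ P') :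
    extHomApp k P' f p = 0 := by
  rw [extHomApp, dif_neg hp]

lemma extendByZero_map' (hconv : IsConvex P') (M : ↥P' ⥤ ModuleCat.{0} k)
    {p q : P} (f'' : p ⟶ q) (hp : p ∈ P') (hq : q ∈ P') :
    (extendByZero k P' hconv M).map f'' =
      eqToHom (extObj_pos k P' M hp) ≫
        M.map (homOfLE (show (⟨p, hp⟩ : ↥P') ≤ ⟨q, hq⟩ from leOfHom f'')) ≫
          eqToHom (extObj_pos k P' M hq).symm := by
  show extMap k P' M p q (leOfHom f'') = _
  rw [extMap, dif_pos hp, dif_pos hq]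

lemma extendByZero_map_zero₁ (hconv : IsConvex P') (M : ↥P' ⥤ ModuleCat.{0} k)
    {p q : P} (f'' : p ⟶ q) (hp : p ∉ P') :
    (extendByZero k P' hconv M).map f'' = 0 := by
  show extMap k P' M p q (leOfHom f'') = _
  rw [extMap, dif_neg hp]
  rfl

lemma extendByZero_map_zero₂ (hconv : IsConvex P') (M : ↥P' ⥤ ModuleCat.{0} k)
    {p q : P} (f'' : p ⟶ q) (hq : q ∉ P') :
    (extendByZero k P' hconv M).map f'' = 0 := by
  show extMap k P' M p q (leOfHom f'') = _
  rw [extMap]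
  by_cases hp : p ∈ P'
  · rw [dif_pos hp, dif_neg hq]; rfl
  · rw [dif_neg hp]; rfl

lemma extHomApp_id (M : ↥P' ⥤ ModuleCat.{0} k) (p : P) :
    extHomApp k P' (𝟙 M) p = 𝟙 (extObj k P' M p) := by
  by_cases hp : p ∈ P'
  · rw [extHomApp_pos k P' (𝟙 M) hp]
    simp
  · rw [extHomApp_neg k P' (𝟙 M) hp]
    exact (extObj_isZero k P' M hp).eq_of_src _ _

lemma extHomApp_comp {M N O : ↥P' ⥤ ModuleCat.{0} k} (f : M ⟶ N) (g : N ⟶ O) (p : P) :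
    extHomApp k P' (f ≫ g) p = extHomApp k P' f p ≫ extHomApp k P' g p := by
  by_cases hp : p ∈ P'
  · rw [extHomApp_pos k P' (f ≫ g) hp, extHomApp_pos k P' f hp, extHomApp_pos k P' g hp]
    simp
  · rw [extHomApp_neg k P' (f ≫ g) hp, extHomApp_neg k P' f hp]
    simp

/-- Extension by zero, as a functor. -/
noncomputable def extF (hconv : IsConvex P') :
    (↥P' ⥤ ModuleCat.{0} k) ⥤ (P ⥤ ModuleCat.{0} k) where
  obj M := extendByZero k P' hconv M
  map f := extendByZeroHom k P' hconv f
  map_id M := by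
    apply NatTrans.ext
    funext p
    exact extHomApp_id k P' M p
  map_comp f g := by
    apply NatTrans.ext
    funext p
    exact extHomApp_comp k P' f g p

instance extF_additive (hconv : IsConvex P') : (extF k P' hconv).Additive where
  map_add {M N f g} := by
    apply NatTrans.ext
    funext p
    show extHomApp k P' (f + g) p =
      (extendByZeroHom k P' hconv f + extendByZeroHom k P' hconv g).app p
    rw [NatTrans.app_add]
    show _ = extHomApp k P' f p + extHomApp k P' g p
    by_cases hp : p ∈ P'
    · rw [extHomApp_pos k P' (f + g) hp, extHomApp_pos k P' f hp, extHomApp_pos k P' g hp,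
        NatTrans.app_add]
      simp [Preadditive.add_comp, Preadditive.comp_add]
    · rw [extHomApp_neg k P' (f + g) hp, extHomApp_neg k P' f hp, extHomApp_neg k P' g hp]
      simp

open Classical in
/-- Construct an isomorphism `N ≅ extendByZero M` from componentwise data. -/
noncomputable def extIsoOfRes (hconv : IsConvex P') (N : P ⥤ ModuleCat.{0} k)
    (M : ↥P' ⥤ ModuleCat.{0} k)
    (hN : ∀ p, p ∉ P' → IsZero (N.obj p))
    (e : ∀ q : ↥P', N.obj ↑q ≅ M.obj q)
    (hnat : ∀ (q r : ↥P') (h : q ≤ r),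
      N.map (homOfLE (show (q : P) ≤ ↑r from h)) ≫ (e r).hom
        = (e q).hom ≫ M.map (homOfLE h)) :
    N ≅ extendByZero k P' hconv M :=
  NatIso.ofComponents
    (fun p =>
      if hp : p ∈ P' then e ⟨p, hp⟩ ≪≫ eqToIso (extObj_pos k P' M hp).symm
      else (hN p hp).iso (extObj_isZero k P' M hp))
    (by
      intro p q f
      by_cases hq : q ∈ P'
      · by_cases hp : p ∈ P'
        · rw [dif_pos hp, dif_pos hq, extendByZero_map' k P' hconv M f hp hq]
          have hf : f = homOfLE (show p ≤ q from leOfHom f) := Subsingleton.elim _ _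
          rw [hf]
          dsimp only [extendByZero]
          simp only [Iso.trans_hom, eqToIso.hom, Category.assoc, eqToHom_trans_assoc,
            eqToHom_refl, Category.id_comp]
          rw [← Category.assoc, ← Category.assoc]
          exact congrArg (· ≫ _) (hnat ⟨p, hp⟩ ⟨q, hq⟩ (leOfHom f))
        · exact (hN p hp).eq_of_src _ _
      · exact (extObj_isZero k P' M hq).eq_of_tgt _ _)

end ExtFunctor

section Image

variable {P : Type} [PartialOrder P] {P' : Set P}

lemma isConvex_image (hconv : IsConvex P') {S : Set ↥P'} (hS : IsConvex S) :
    IsConvex (Subtype.val '' S) := by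
  rintro x y z ⟨x', hx', rfl⟩ ⟨y', hy', rfl⟩ hxz hzy
  have hz : z ∈ P' := hconv x'.2 y'.2 hxz hzy
  exact ⟨⟨z, hz⟩, hS hx' hy' hxz hzy, rfl⟩

lemma zigzag_image {S : Set ↥P'} (a b : ↥S) (h : ZigzagConnIn S a b) :
    ZigzagConnIn (Subtype.val '' S) ⟨↑↑a, ⟨↑a, a.2, rfl⟩⟩ ⟨↑↑b, ⟨↑b, b.2, rfl⟩⟩ := by
  induction h with
  | refl => exact Relation.ReflTransGen.refl
  | @tail m c h1 hstep ih => exact ih.tail hstep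

lemma isIntervalSet_image (hconv : IsConvex P') {S : Set ↥P'} (hS : IsIntervalSet S) :
    IsIntervalSet (Subtype.val '' S) := by
  obtain ⟨⟨a0, ha0⟩, hSc, hScon⟩ := hS
  refine ⟨⟨↑a0, a0, ha0, rfl⟩, isConvex_image hconv hSc, ?_⟩
  rintro ⟨x, hx⟩ ⟨y, hy⟩
  obtain ⟨x', hx', hxe⟩ := hx
  obtain ⟨y', hy', hye⟩ := hy
  have := zigzag_image (S := S) ⟨x', hx'⟩ ⟨y', hy'⟩ (hScon ⟨x', hx'⟩ ⟨y', hy'⟩)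
  have e1 : (⟨↑x', ⟨x', hx', rfl⟩⟩ : ↥(Subtype.val '' S)) = ⟨x, ⟨x', hx', hxe⟩⟩ :=
    Subtype.ext hxe
  have e2 : (⟨↑y', ⟨y', hy', rfl⟩⟩ : ↥(Subtype.val '' S)) = ⟨y, ⟨y', hy', hye⟩⟩ :=
    Subtype.ext hye
  rwa [e1, e2] at this

end Image

section ExtInterval

variable (k : Type) [Field k] {P : Type} [PartialOrder P] (P' : Set P)

open Classical in
/-- The extension by zero of an interval module is the interval module of the image. -/
noncomputable def extIntervalIso (hconv : IsConvex P') {S : Set ↥P'} (hS : IsConvex S)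
    (hS' : IsConvex (Subtype.val '' S)) :
    intervalModule k (Subtype.val '' S) hS' ≅
      extendByZero k P' hconv (intervalModule k S hS) := by
  refine extIsoOfRes k P' hconv _ _ (fun p hp => ?_) (fun q => ?_) (fun q r h => ?_)
  · refine IObj_isZero k _ (fun hmem => ?_)
    obtain ⟨q', _, rfl⟩ := hmem
    exact hp q'.2
  · -- componentwise iso
    have hiff : (↑q ∈ Subtype.val '' S) ↔ q ∈ S := Subtype.val_injective.mem_set_image
    refine ⟨IHomM k _ _, IHomM k _ _, ?_, ?_⟩
    · apply ModuleCat.hom_ext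
      apply LinearMap.ext
      rintro ⟨x, hx⟩
      apply Subtype.ext
      show (if q ∈ S ∧ ↑q ∈ Subtype.val '' S then (1 : k) else 0) *
        ((if ↑q ∈ Subtype.val '' S ∧ q ∈ S then (1 : k) else 0) * x) = x
      by_cases hq : q ∈ S
      · simp [hq, hiff.mpr hq]
      · have : x = 0 := elt_zero k (fun h => hq (hiff.mp h)) ⟨x, hx⟩
        simp [this]
    · apply ModuleCat.hom_ext
      apply LinearMap.ext
      rintro ⟨x, hx⟩
      apply Subtype.ext
      show (if ↑q ∈ Subtype.val '' S ∧ q ∈ S then (1 : k) else 0) *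
        ((if q ∈ S ∧ ↑q ∈ Subtype.val '' S then (1 : k) else 0) * x) = x
      by_cases hq : q ∈ S
      · simp [hq, hiff.mpr hq]
      · have : x = 0 := elt_zero k hq ⟨x, hx⟩
        simp [this]
  · -- naturality
    have hiffq : (↑q ∈ Subtype.val '' S) ↔ q ∈ S := Subtype.val_injective.mem_set_image
    have hiffr : (↑r ∈ Subtype.val '' S) ↔ r ∈ S := Subtype.val_injective.mem_set_image
    apply ModuleCat.hom_ext
    apply LinearMap.ext
    rintro ⟨x, hx⟩
    apply Subtype.ext
    show (if ↑r ∈ Subtype.val '' S ∧ r ∈ S then (1 : k) else 0) *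
        ((if ↑q ∈ Subtype.val '' S ∧ ↑r ∈ Subtype.val '' S then (1 : k) else 0) * x)
      = (if q ∈ S ∧ r ∈ S then (1 : k) else 0) *
        ((if ↑q ∈ Subtype.val '' S ∧ q ∈ S then (1 : k) else 0) * x)
    by_cases hq : q ∈ S
    · by_cases hr : r ∈ S
      · simp [hq, hr, hiffq.mpr hq, hiffr.mpr hr]
      · have : ¬ (↑r ∈ Subtype.val '' S) := fun h => hr (hiffr.mp h)
        simp [hr, this]
    · have : x = 0 := elt_zero k (fun h => hq (hiffq.mp h)) ⟨x, hx⟩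
      simp [this]

end ExtInterval

section Decomp

variable (k : Type) [Field k] {Q : Type} [PartialOrder Q]

/-- A module isomorphic to a single interval module is interval-decomposable. -/
lemma isIntervalDecomposable_of_isIntervalModule {M : Q ⥤ ModuleCat.{0} k}
    (h : IsIntervalModule k M) : IsIntervalDecomposable k M := by
  refine ⟨1, fun _ => M, fun _ => h, ⟨?_⟩⟩
  refine ⟨biproduct.lift (fun _ => 𝟙 M), biproduct.π _ 0, by simp, ?_⟩
  apply biproduct.hom_ext
  intro j
  fin_cases j
  simp

end Decomp

section ExtDecomp

variable (k : Type) [Field k] {P : Type} [PartialOrder P] (P' : Set P)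

lemma isIntervalDecomposable_ext (hconv : IsConvex P') {X : ↥P' ⥤ ModuleCat.{0} k}
    (hX : IsIntervalDecomposable k X) :
    IsIntervalDecomposable k (extendByZero k P' hconv X) := by
  obtain ⟨n, J, hJ, ⟨e⟩⟩ := hX
  refine ⟨n, fun i => (extF k P' hconv).obj (J i), fun i => ?_, ⟨?_⟩⟩
  · obtain ⟨S, hS, ⟨eJ⟩⟩ := hJ i
    exact ⟨Subtype.val '' S, isIntervalSet_image hconv hS,
      ⟨(extF k P' hconv).mapIso eJ ≪≫
        (extIntervalIso k P' hconv hS.2.1 (isIntervalSet_image hconv hS).2.1).symm⟩⟩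
  · exact (extF k P' hconv).mapIso e ≪≫ Functor.mapBiproduct (extF k P' hconv) J

end ExtDecomp

section CompSum

variable (k : Type) [Field k] {Q : Type} [PartialOrder Q]

/-- Inclusion of a component's interval module into the whole convex set's module. -/
noncomputable def inclComp (U : Set Q) (hU : IsConvex U) (i : Quotient (compRel U)) :
    intervalModule k (compSet U i) (compSet_isInterval U hU i).2.1 ⟶
      intervalModule k U hU :=
  indNat k _ _ _ _ (fun p q hpq hp hq =>
    iff_of_true (mem_compSet_step U hp hq (Or.inl hpq)) (compSet_subset U i hp))

/-- Projection from the whole convex set's module onto a component's module. -/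
noncomputable def projComp (U : Set Q) (hU : IsConvex U) (i : Quotient (compRel U)) :
    intervalModule k U hU ⟶
      intervalModule k (compSet U i) (compSet_isInterval U hU i).2.1 :=
  indNat k _ _ _ _ (fun p q hpq hp hq =>
    iff_of_true (compSet_subset U i hq) (mem_compSet_step U hq hp (Or.inr hpq)))

open Classical in
lemma sum_projComp_inclComp (U : Set Q) (hU : IsConvex U)
    [Fintype (Quotient (compRel U))] :
    ∑ i : Quotient (compRel U), projComp k U hU i ≫ inclComp k U hU i
      = 𝟙 (intervalModule k U hU) := by
  apply NatTrans.ext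
  funext q
  rw [NatTrans.app_sum]
  have happ : ∀ i : Quotient (compRel U),
      (projComp k U hU i ≫ inclComp k U hU i).app q
        = (if q ∈ compSet U i then 𝟙 ((intervalModule k U hU).obj q) else 0) := by
    intro i
    show IHomM k (q ∈ U) (q ∈ compSet U i) ≫ IHomM k (q ∈ compSet U i) (q ∈ U) = _
    by_cases hi : q ∈ compSet U i
    · refine Eq.trans ?_ (if_pos hi).symm
      apply ModuleCat.hom_ext
      apply LinearMap.ext
      rintro ⟨x, hx⟩
      apply Subtype.ext
      show (if q ∈ compSet U i ∧ q ∈ U then (1 : k) else 0) *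
        ((if q ∈ U ∧ q ∈ compSet U i then (1 : k) else 0) * x) = x
      simp [hi, compSet_subset U i hi]
    · refine Eq.trans ?_ (if_neg hi).symm
      rw [(IObj_isZero k _ hi).eq_of_tgt (IHomM k (q ∈ U) (q ∈ compSet U i)) 0, zero_comp]
      rfl
  rw [Finset.sum_congr rfl (fun i _ => happ i)]
  show _ = 𝟙 ((intervalModule k U hU).obj q)
  by_cases hq : q ∈ U
  · rw [Finset.sum_eq_single (Quotient.mk (compRel U) ⟨q, hq⟩)]
    · rw [if_pos (mem_compSet_mk U hq)]
    · intro j _ hj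
      rw [if_neg (fun hmem => hj (compSet_eq_of_mem U hmem (mem_compSet_mk U hq)))]
    · intro h
      exact absurd (Finset.mem_univ _) h
  · exact (IObj_isZero k _ hq).eq_of_src _ _

end CompSum

section Core

variable (k : Type) [Field k] {P : Type} [PartialOrder P] (P' : Set P)

/-- The set of good points of `S`: points of `S ∩ P'` having no point of `S` below them
outside of `P'`. -/
def goodSet (S : Set P) : Set ↥P' :=
  {q : ↥P' | (↑q : P) ∈ S ∧ ∀ p ∈ S, p ≤ ↑q → p ∈ P'}

lemma goodSet_convex (S : Set P) (hSc : IsConvex S) : IsConvex (goodSet P' S) := by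
  intro x y z hx hy hxz hzy
  exact ⟨hSc hx.1 hy.1 hxz hzy, fun p hp hple => hy.2 p hp (le_trans hple hzy)⟩

open Classical in
lemma gamma_zero (hconv : IsConvex P') (M : ↥P' ⥤ ModuleCat.{0} k)
    (S : Set P) (hSc : IsConvex S) (g : intervalModule k S hSc ⟶ extendByZero k P' hconv M)
    (q : ↥P') (hq : q ∉ goodSet P' S) :
    g.app (↑q : P) ≫ eqToHom (extObj_pos k P' M q.2) = 0 := by
  by_cases hqS : (↑q : P) ∈ S
  · have hex : ∃ p, p ∈ S ∧ p ≤ ↑q ∧ p ∉ P' := by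
      by_contra hcon
      push_neg at hcon
      exact hq ⟨hqS, fun p hp hple => hcon p hp hple⟩
    obtain ⟨p, hpS, hple, hpP⟩ := hex
    have hg : (intervalModule k S hSc).map (homOfLE hple) ≫ g.app ↑q = 0 := by
      rw [g.naturality (homOfLE hple),
        extendByZero_map_zero₁ k P' hconv M (homOfLE hple) hpP, comp_zero]
    have hgq : g.app (↑q : P) = 0 := by
      apply ModuleCat.hom_ext
      apply LinearMap.ext
      rintro ⟨y, hy⟩
      have h2 : (⟨y, hy⟩ : ↥(if (↑q : P) ∈ S then (⊤ : Submodule k k) else ⊥)) =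
          (intervalModule k S hSc).map (homOfLE hple) ⟨y, by simp [hpS]⟩ := by
        apply Subtype.ext
        show y = (if p ∈ S ∧ (↑q : P) ∈ S then (1 : k) else 0) * y
        simp [hpS, hqS]
      rw [h2]
      show ((intervalModule k S hSc).map (homOfLE hple) ≫ g.app ↑q) ⟨y, _⟩ = _
      rw [hg]
      rfl
    rw [hgq, zero_comp]
  · exact (IObj_isZero k _ hqS).eq_of_src _ _

lemma gamma_nat (hconv : IsConvex P') (M : ↥P' ⥤ ModuleCat.{0} k)
    (S : Set P) (hSc : IsConvex S) (g : intervalModule k S hSc ⟶ extendByZero k P' hconv M)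
    (q r : ↥P') (hqr : (↑q : P) ≤ ↑r) :
    (intervalModule k S hSc).map (homOfLE hqr) ≫ g.app ↑r ≫ eqToHom (extObj_pos k P' M r.2)
      = (g.app ↑q ≫ eqToHom (extObj_pos k P' M q.2)) ≫
          M.map (homOfLE (show q ≤ r from hqr)) := by
  have hn := g.naturality (homOfLE hqr)
  rw [extendByZero_map' k P' hconv M (homOfLE hqr) q.2 r.2] at hn
  have hMeq : M.map (homOfLE (show (⟨↑q, q.2⟩ : ↥P') ≤ ⟨↑r, r.2⟩ from
        leOfHom (homOfLE hqr))) = M.map (homOfLE (show q ≤ r from hqr)) :=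
    congrArg M.map (Subsingleton.elim _ _)
  rw [hMeq] at hn
  rw [← Category.assoc, hn]
  simp [Category.assoc, extendByZero]

open Classical in
/-- The restriction of `g : k_S ⟶ extendByZero M` to the good part of `S`. -/
noncomputable def resHom (hconv : IsConvex P') (M : ↥P' ⥤ ModuleCat.{0} k)
    (S : Set P) (hSc : IsConvex S) (g : intervalModule k S hSc ⟶ extendByZero k P' hconv M) :
    intervalModule k (goodSet P' S) (goodSet_convex P' S hSc) ⟶ M where
  app q := IHomM k (q ∈ goodSet P' S) ((↑q : P) ∈ S) ≫
    g.app ↑q ≫ eqToHom (extObj_pos k P' M q.2)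
  naturality q r f' := by
    have hqr : (↑q : P) ≤ ↑r := leOfHom f'
    have hMeq : M.map f' = M.map (homOfLE (show q ≤ r from hqr)) :=
      congrArg M.map (Subsingleton.elim _ _)
    rw [hMeq]
    have hgn : g.app ↑q ≫ eqToHom (extObj_pos k P' M q.2) ≫ M.map (homOfLE (show q ≤ r from hqr))
        = (intervalModule k S hSc).map (homOfLE hqr) ≫ g.app ↑r ≫ eqToHom (extObj_pos k P' M r.2) := by
      have hg0 := gamma_nat k P' hconv M S hSc g q r hqr
      simp only [Category.assoc] at hg0
      exact hg0.symm
    by_cases hr : r ∈ goodSet P' S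
    · have hind : (intervalModule k (goodSet P' S) (goodSet_convex P' S hSc)).map f' ≫
          IHomM k (r ∈ goodSet P' S) ((↑r : P) ∈ S)
            = IHomM k (q ∈ goodSet P' S) ((↑q : P) ∈ S) ≫
              (intervalModule k S hSc).map (homOfLE hqr) := by
        apply ModuleCat.hom_ext
        apply LinearMap.ext
        rintro ⟨x, hx⟩
        apply Subtype.ext
        show (if r ∈ goodSet P' S ∧ (↑r : P) ∈ S then (1 : k) else 0) *
            ((if q ∈ goodSet P' S ∧ r ∈ goodSet P' S then (1 : k) else 0) * x)
          = (if (↑q : P) ∈ S ∧ (↑r : P) ∈ S then (1 : k) else 0) *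
            ((if q ∈ goodSet P' S ∧ (↑q : P) ∈ S then (1 : k) else 0) * x)
        by_cases hq : q ∈ goodSet P' S
        · simp [hq, hr, hq.1, hr.1]
        · have : x = 0 := elt_zero k hq ⟨x, hx⟩
          simp [this]
      dsimp only [intervalModule, extendByZero] at g hind hgn ⊢
      simp only [Category.assoc]
      rw [hgn, ← Category.assoc, hind, Category.assoc]
    · have h0 := gamma_zero k P' hconv M S hSc g r hr
      dsimp only [intervalModule, extendByZero] at g hgn h0 ⊢
      simp only [Category.assoc]
      rw [hgn, h0]
      apply ModuleCat.hom_ext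
      apply LinearMap.ext
      intro x
      rfl

end Core

section CoreFactor

variable (k : Type) [Field k] {P : Type} [PartialOrder P] (P' : Set P)

open Classical in
/-- The extension of a morphism `h'' : k_(goodSet S) ⟶ X` to a morphism
`k_S ⟶ extendByZero X`. -/
noncomputable def liftHom (hconv : IsConvex P') (X : ↥P' ⥤ ModuleCat.{0} k)
    (S : Set P) (hSc : IsConvex S)
    (h'' : intervalModule k (goodSet P' S) (goodSet_convex P' S hSc) ⟶ X) :
    intervalModule k S hSc ⟶ extendByZero k P' hconv X where
  app p := if hp : p ∈ P' then
      IHomM k (p ∈ S) (⟨p, hp⟩ ∈ goodSet P' S) ≫ h''.app ⟨p, hp⟩ ≫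
        eqToHom (extObj_pos k P' X hp).symm
    else 0
  naturality p q fpq := by
    by_cases hq : q ∈ P'
    · by_cases hp : p ∈ P'
      · rw [dif_pos hp, dif_pos hq, extendByZero_map' k P' hconv X fpq hp hq]
        dsimp only [intervalModule, extendByZero] at h'' ⊢
        simp only [Category.assoc, eqToHom_trans_assoc, eqToHom_refl, Category.id_comp]
        rw [← h''.naturality_assoc]
        have hind : (intervalModule k S hSc).map fpq ≫
            IHomM k (q ∈ S) (⟨q, hq⟩ ∈ goodSet P' S)
            = IHomM k (p ∈ S) (⟨p, hp⟩ ∈ goodSet P' S) ≫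
              (intervalModule k (goodSet P' S) (goodSet_convex P' S hSc)).map
                (homOfLE (show (⟨p, hp⟩ : ↥P') ≤ ⟨q, hq⟩ from leOfHom fpq)) := by
          apply ModuleCat.hom_ext
          apply LinearMap.ext
          rintro ⟨x, hx⟩
          apply Subtype.ext
          show (if q ∈ S ∧ (⟨q, hq⟩ : ↥P') ∈ goodSet P' S then (1 : k) else 0) *
              ((if p ∈ S ∧ q ∈ S then (1 : k) else 0) * x)
            = (if (⟨p, hp⟩ : ↥P') ∈ goodSet P' S ∧ (⟨q, hq⟩ : ↥P') ∈ goodSet P' S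
                then (1 : k) else 0) *
              ((if p ∈ S ∧ (⟨p, hp⟩ : ↥P') ∈ goodSet P' S then (1 : k) else 0) * x)
          by_cases hpS : p ∈ S
          · by_cases hqU : (⟨q, hq⟩ : ↥P') ∈ goodSet P' S
            · have hpU : (⟨p, hp⟩ : ↥P') ∈ goodSet P' S :=
                ⟨hpS, fun r hr hrle => hqU.2 r hr (le_trans hrle (leOfHom fpq))⟩
              simp [hpS, hqU, hpU, hqU.1]
            · simp [hqU]
          · have : x = 0 := elt_zero k hpS ⟨x, hx⟩
            simp [this]
        dsimp only [intervalModule] at hind ⊢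
        rw [← Category.assoc, hind, Category.assoc]
      · rw [dif_neg hp, dif_pos hq, zero_comp]
        have hzero : (intervalModule k S hSc).map fpq ≫
            IHomM k (q ∈ S) (⟨q, hq⟩ ∈ goodSet P' S) = 0 := by
          apply ModuleCat.hom_ext
          apply LinearMap.ext
          rintro ⟨x, hx⟩
          apply Subtype.ext
          show (if q ∈ S ∧ (⟨q, hq⟩ : ↥P') ∈ goodSet P' S then (1 : k) else 0) *
            ((if p ∈ S ∧ q ∈ S then (1 : k) else 0) * x) = 0
          by_cases hpS : p ∈ S
          · have : ¬ ((⟨q, hq⟩ : ↥P') ∈ goodSet P' S) :=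
              fun hqU => hp (hqU.2 p hpS (leOfHom fpq))
            simp [this]
          · have : x = 0 := elt_zero k hpS ⟨x, hx⟩
            simp [this]
        dsimp only [intervalModule, extendByZero] at h'' hzero ⊢
        rw [← Category.assoc, hzero]
        exact zero_comp
    · exact (extObj_isZero k P' X hq).eq_of_tgt _ _

open Classical in
lemma liftHom_comp (hconv : IsConvex P') (X M : ↥P' ⥤ ModuleCat.{0} k) (f : X ⟶ M)
    (S : Set P) (hSc : IsConvex S)
    (g : intervalModule k S hSc ⟶ extendByZero k P' hconv M)
    (h'' : intervalModule k (goodSet P' S) (goodSet_convex P' S hSc) ⟶ X)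
    (hh'' : h'' ≫ f = resHom k P' hconv M S hSc g) :
    liftHom k P' hconv X S hSc h'' ≫ extendByZeroHom k P' hconv f = g := by
  apply NatTrans.ext
  funext p
  show (if hp : p ∈ P' then
      IHomM k (p ∈ S) (⟨p, hp⟩ ∈ goodSet P' S) ≫ h''.app ⟨p, hp⟩ ≫
        eqToHom (extObj_pos k P' X hp).symm
    else 0) ≫ extHomApp k P' f p = g.app p
  by_cases hp : p ∈ P'
  · rw [dif_pos hp, extHomApp_pos k P' f hp]
    dsimp only [intervalModule, extendByZero] at h'' ⊢
    simp only [Category.assoc, eqToHom_trans_assoc, eqToHom_refl, Category.id_comp]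
    have hcomp : h''.app ⟨p, hp⟩ ≫ f.app ⟨p, hp⟩
        = (resHom k P' hconv M S hSc g).app ⟨p, hp⟩ :=
      congrArg (fun t => t.app (⟨p, hp⟩ : ↥P')) hh''
    have hcomp' : ∀ {Z : ModuleCat.{0} k} (t : M.obj ⟨p, hp⟩ ⟶ Z),
        h''.app ⟨p, hp⟩ ≫ f.app ⟨p, hp⟩ ≫ t
          = (resHom k P' hconv M S hSc g).app ⟨p, hp⟩ ≫ t := by
      intro Z t
      rw [← Category.assoc, hcomp]
      rfl
    rw [hcomp']
    show IHomM k (p ∈ S) (⟨p, hp⟩ ∈ goodSet P' S) ≫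
      (IHomM k ((⟨p, hp⟩ : ↥P') ∈ goodSet P' S) (p ∈ S) ≫
        g.app p ≫ eqToHom (extObj_pos k P' M (⟨p, hp⟩ : ↥P').2)) ≫
          eqToHom (extObj_pos k P' M hp).symm = g.app p
    dsimp only [intervalModule, extendByZero] at g ⊢
    simp only [Category.assoc, eqToHom_trans, eqToHom_refl, Category.comp_id]
    by_cases hpU : (⟨p, hp⟩ : ↥P') ∈ goodSet P' S
    · have hid : IHomM k (p ∈ S) (⟨p, hp⟩ ∈ goodSet P' S) ≫
          IHomM k ((⟨p, hp⟩ : ↥P') ∈ goodSet P' S) (p ∈ S)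
          = 𝟙 ((intervalModule k S hSc).obj p) := by
        apply ModuleCat.hom_ext
        apply LinearMap.ext
        rintro ⟨x, hx⟩
        apply Subtype.ext
        show (if (⟨p, hp⟩ : ↥P') ∈ goodSet P' S ∧ p ∈ S then (1 : k) else 0) *
          ((if p ∈ S ∧ (⟨p, hp⟩ : ↥P') ∈ goodSet P' S then (1 : k) else 0) * x) = x
        by_cases hpS : p ∈ S
        · simp [hpS, hpU]
        · have : x = 0 := elt_zero k hpS ⟨x, hx⟩
          simp [this]
      rw [← Category.assoc, hid]
      exact Category.id_comp _
    · have hg0 : g.app p = 0 := by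
        have h0 := gamma_zero k P' hconv M S hSc g ⟨p, hp⟩ hpU
        calc g.app p
            = (g.app p ≫ eqToHom (extObj_pos k P' M hp)) ≫
                eqToHom (extObj_pos k P' M hp).symm := by simp
          _ = 0 := (congrArg (· ≫ _) h0).trans zero_comp
      rw [hg0]
      simp only [comp_zero]
  · rw [dif_neg hp, zero_comp]
    exact ((extObj_isZero k P' M hp).eq_of_tgt _ _)

open Classical in
lemma coreFactor [Finite P] (hconv : IsConvex P') (X M : ↥P' ⥤ ModuleCat.{0} k) (f : X ⟶ M)
    (hf : ∀ ⦃Y : ↥P' ⥤ ModuleCat.{0} k⦄ (g0 : Y ⟶ M), IsIntervalDecomposable k Y →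
      ∃ h0 : Y ⟶ X, h0 ≫ f = g0)
    (S : Set P) (hSc : IsConvex S)
    (g : intervalModule k S hSc ⟶ extendByZero k P' hconv M) :
    ∃ h : intervalModule k S hSc ⟶ extendByZero k P' hconv X,
      h ≫ extendByZeroHom k P' hconv f = g := by
  have hUc : IsConvex (goodSet P' S) := goodSet_convex P' S hSc
  haveI : Fintype (Quotient (compRel (goodSet P' S))) := Fintype.ofFinite _
  have hfac : ∀ i : Quotient (compRel (goodSet P' S)),
      ∃ h0 : intervalModule k (compSet (goodSet P' S) i)
          (compSet_isInterval (goodSet P' S) hUc i).2.1 ⟶ X,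
        h0 ≫ f = inclComp k (goodSet P' S) hUc i ≫ resHom k P' hconv M S hSc g := by
    intro i
    exact hf _ (isIntervalDecomposable_of_isIntervalModule k
      ⟨compSet (goodSet P' S) i, compSet_isInterval (goodSet P' S) hUc i, ⟨Iso.refl _⟩⟩)
  choose h0 hh0 using hfac
  have hh'' : (∑ i : Quotient (compRel (goodSet P' S)),
        projComp k (goodSet P' S) hUc i ≫ h0 i) ≫ f
      = resHom k P' hconv M S hSc g := by
    rw [Preadditive.sum_comp]
    calc (∑ i : Quotient (compRel (goodSet P' S)),
            (projComp k (goodSet P' S) hUc i ≫ h0 i) ≫ f)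
        = ∑ i : Quotient (compRel (goodSet P' S)),
            projComp k (goodSet P' S) hUc i ≫
              (inclComp k (goodSet P' S) hUc i ≫ resHom k P' hconv M S hSc g) := by
          apply Finset.sum_congr rfl
          intro i _
          rw [Category.assoc, hh0 i]
      _ = (∑ i : Quotient (compRel (goodSet P' S)),
            projComp k (goodSet P' S) hUc i ≫ inclComp k (goodSet P' S) hUc i) ≫
              resHom k P' hconv M S hSc g := by
          rw [Preadditive.sum_comp]
          apply Finset.sum_congr rfl
          intro i _
          rw [Category.assoc]
      _ = resHom k P' hconv M S hSc g := by
          rw [sum_projComp_inclComp k (goodSet P' S) hUc, Category.id_comp]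
  exact ⟨liftHom k P' hconv X S hSc _, liftHom_comp k P' hconv X M f S hSc g _ hh''⟩

end CoreFactor


end IntervalCoverAux
/-- If `f : X ⟶ M` is an interval cover over a convex full subposet `P'`
of `P`, then its extension by zero is an interval cover over `P`. -/
theorem intervalCover_extendByZero
    (k : Type) [Field k] (P : Type) [PartialOrder P] [Finite P]
    (P' : Set P) (hconv : IsConvex P')
    (X M : ↥P' ⥤ ModuleCat.{0} k) (hM : PointwiseFinite k M)
    (f : X ⟶ M) (hf : IsIntervalCover k f) :
    IsIntervalCover k (extendByZeroHom k P' hconv f) := by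
  classical
  obtain ⟨⟨hXdec, happrox⟩, hmin⟩ := hf
  constructor
  · constructor
    · exact IntervalCoverAux.isIntervalDecomposable_ext k P' hconv hXdec
    · intro Y g hY
      obtain ⟨n, J, hJ, ⟨e⟩⟩ := hY
      have hfac : ∀ i : Fin n, ∃ h : J i ⟶ extendByZero k P' hconv X,
          h ≫ extendByZeroHom k P' hconv f = biproduct.ι J i ≫ e.inv ≫ g := by
        intro i
        obtain ⟨S, hS, ⟨eJ⟩⟩ := hJ i
        obtain ⟨h0, hh0⟩ := IntervalCoverAux.coreFactor k P' hconv X M f happrox S hS.2.1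
          (eJ.inv ≫ biproduct.ι J i ≫ e.inv ≫ g)
        refine ⟨eJ.hom ≫ h0, ?_⟩
        rw [Category.assoc, hh0, Iso.hom_inv_id_assoc]
      choose h hh using hfac
      refine ⟨e.hom ≫ biproduct.desc h, ?_⟩
      have hdesc : biproduct.desc h ≫ extendByZeroHom k P' hconv f = e.inv ≫ g := by
        apply biproduct.hom_ext'
        intro i
        rw [biproduct.ι_desc_assoc, hh i]
      rw [Category.assoc, hdesc, Iso.hom_inv_id_assoc]
  · intro φ hφ
    -- restrict φ to an endomorphism of X
    let ψ : X ⟶ X :=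
      { app := fun q => eqToHom (extObj_pos k P' X q.2).symm ≫ φ.app ↑q ≫
          eqToHom (extObj_pos k P' X q.2)
        naturality := by
          intro q r f'
          have hn := φ.naturality (homOfLE (show (↑q : P) ≤ ↑r from leOfHom f'))
          rw [IntervalCoverAux.extendByZero_map' k P' hconv X
            (homOfLE (show (↑q : P) ≤ ↑r from leOfHom f')) q.2 r.2] at hn
          have hXeq : X.map (homOfLE (show (⟨↑q, q.2⟩ : ↥P') ≤ ⟨↑r, r.2⟩ from
              leOfHom (homOfLE (show (↑q : P) ≤ ↑r from leOfHom f')))) = X.map f' :=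
            congrArg X.map (Subsingleton.elim _ _)
          rw [hXeq] at hn
          have h2 := congrArg
            (fun t => eqToHom (extObj_pos k P' X q.2).symm ≫ t ≫
              eqToHom (extObj_pos k P' X r.2)) hn
          dsimp only [extendByZero] at φ h2 ⊢
          simp only [Category.assoc, eqToHom_trans_assoc, eqToHom_refl, Category.id_comp,
            eqToHom_trans, Category.comp_id] at h2 ⊢
          exact h2 }
    have hψf : ψ ≫ f = f := by
      apply NatTrans.ext
      funext q
      show (eqToHom (extObj_pos k P' X q.2).symm ≫ φ.app ↑q ≫
        eqToHom (extObj_pos k P' X q.2)) ≫ f.app q = f.app q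
      have happ : φ.app (↑q : P) ≫ extHomApp k P' f ↑q = extHomApp k P' f ↑q :=
        congrArg (fun t => t.app (↑q : P)) hφ
      rw [IntervalCoverAux.extHomApp_pos k P' f q.2] at happ
      have h2 := congrArg
        (fun t => eqToHom (extObj_pos k P' X q.2).symm ≫ t ≫
          eqToHom (extObj_pos k P' M q.2)) happ
      dsimp only [extendByZero] at φ h2 ⊢
      simp only [Category.assoc, eqToHom_trans_assoc, eqToHom_refl, Category.id_comp,
        eqToHom_trans, Category.comp_id] at h2
      simp only [Category.assoc]
      exact h2
    haveI hψiso : IsIso ψ := hmin ψ hψf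
    have happiso : ∀ p : P, IsIso (φ.app p) := by
      intro p
      by_cases hp : p ∈ P'
      · have hconj : φ.app p = eqToHom (extObj_pos k P' X hp) ≫ ψ.app ⟨p, hp⟩ ≫
            eqToHom (extObj_pos k P' X hp).symm := by
          show φ.app p = eqToHom (extObj_pos k P' X hp) ≫
            (eqToHom (extObj_pos k P' X (⟨p, hp⟩ : ↥P').2).symm ≫ φ.app ↑(⟨p, hp⟩ : ↥P') ≫
              eqToHom (extObj_pos k P' X (⟨p, hp⟩ : ↥P').2)) ≫
            eqToHom (extObj_pos k P' X hp).symm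
          dsimp only [extendByZero] at φ ⊢
          simp only [Category.assoc, eqToHom_trans_assoc, eqToHom_refl, Category.id_comp,
            eqToHom_trans, Category.comp_id]
        haveI : IsIso (ψ.app ⟨p, hp⟩) := NatIso.isIso_app_of_isIso ψ _
        rw [hconj]
        dsimp only [extendByZero]
        infer_instance
      · have h0 : φ.app p = 𝟙 _ := (extObj_isZero k P' X hp).eq_of_src _ _
        rw [h0]
        infer_instance
    exact NatIso.isIso_of_isIso_app φ
end

section
/- Let P be a finite poset, k a field, and Q a full subposet of P with inclusion ι : Q ↪ P. Let M be a persistence module over Q with End(M) ≅ k (a brick). Then: (1) for every proper subobject Y of Lan(M), the restriction Res(Y) is not isomorphic to M; (2) for every proper quotient Z of Ran(M), the restriction Res(Z) is not isomorphic to M. -/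
open CategoryTheory CategoryTheory.Limits

attribute [local instance] CategoryTheory.Limits.HasFiniteBiproducts.of_hasFiniteProducts

section KanTheta

variable (k : Type) [Field k] {P : Type} [PartialOrder P] (Q : Set P)

/-- The restriction functor along the inclusion `ι : Q ↪ P` of a full subposet
(precomposition with `ι`). -/
noncomputable def resFunctor : (P ⥤ ModuleCat.{0} k) ⥤ (↥Q ⥤ ModuleCat.{0} k) :=
  (CategoryTheory.Functor.whiskeringLeft _ _ _).obj (Subtype.mono_coe (· ∈ Q)).functor

variable (L R : (↥Q ⥤ ModuleCat.{0} k) ⥤ (P ⥤ ModuleCat.{0} k))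
variable (adjL : L ⊣ resFunctor k Q) (adjR : resFunctor k Q ⊣ R)

/-- The canonical morphism `θ_M : Lan(M) ⟶ Ran(M)` corresponding to the identity of `M`
under the adjunction isomorphisms
`Hom(Lan M, Ran M) ≅ Hom(M, Res (Ran M)) ≅ Hom(M, M)`. -/
noncomputable def thetaHom [IsIso adjR.counit] (M : ↥Q ⥤ ModuleCat.{0} k) :
    L.obj M ⟶ R.obj M :=
  (adjL.homEquiv M (R.obj M)).symm ((asIso adjR.counit).inv.app M)

lemma thetaHom_naturality [IsIso adjR.counit] {M N : ↥Q ⥤ ModuleCat.{0} k} (f : M ⟶ N) :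
    L.map f ≫ thetaHom k Q L R adjL adjR N = thetaHom k Q L R adjL adjR M ≫ R.map f := by
  dsimp [thetaHom]
  rw [← Adjunction.homEquiv_naturality_left_symm, ← Adjunction.homEquiv_naturality_right_symm]
  congr 1
  simpa using ((asIso adjR.counit).inv.naturality f)

/-- The functor `Θ`, sending `M` to the image of `θ_M : Lan(M) ⟶ Ran(M)`. -/
noncomputable def Theta [IsIso adjR.counit] :
    (↥Q ⥤ ModuleCat.{0} k) ⥤ (P ⥤ ModuleCat.{0} k) where
  obj M := image (thetaHom k Q L R adjL adjR M)
  map {M N} f := image.map (Arrow.homMk' _ _ (thetaHom_naturality k Q L R adjL adjR f))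
  map_id M := by
    have h : Arrow.homMk' _ _ (thetaHom_naturality k Q L R adjL adjR (𝟙 M)) =
        𝟙 (Arrow.mk (thetaHom k Q L R adjL adjR M)) :=
      Arrow.hom_ext _ _ (by simp) (by simp)
    show image.map (Arrow.homMk' _ _ (thetaHom_naturality k Q L R adjL adjR (𝟙 M))) =
      𝟙 (image (thetaHom k Q L R adjL adjR M))
    rw [h, image.map_id]
    rfl
  map_comp {M N O} f g := by
    have h : Arrow.homMk' _ _ (thetaHom_naturality k Q L R adjL adjR (f ≫ g)) =
        Arrow.homMk' _ _ (thetaHom_naturality k Q L R adjL adjR f) ≫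
          Arrow.homMk' _ _ (thetaHom_naturality k Q L R adjL adjR g) :=
      Arrow.hom_ext _ _ (by simp) (by simp)
    show image.map (Arrow.homMk' _ _ (thetaHom_naturality k Q L R adjL adjR (f ≫ g))) =
      image.map (Arrow.homMk' _ _ (thetaHom_naturality k Q L R adjL adjR f)) ≫
        image.map (Arrow.homMk' _ _ (thetaHom_naturality k Q L R adjL adjR g))
    rw [h, image.map_comp]

end KanTheta


section BrickAux
variable {C : Type*} [Category C] [Preadditive C] {k : Type} [Field k]

lemma brick_id_ne_zero {M : C} (e : CategoryTheory.End M ≃+* k) :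
    (𝟙 M : M ⟶ M) ≠ 0 := by
  intro h
  have h1 : e (1 : CategoryTheory.End M) = 1 := map_one e
  have h0 : e (1 : CategoryTheory.End M) = 0 := by
    rw [CategoryTheory.End.one_def, h, map_zero]
  exact one_ne_zero (h1.symm.trans h0)

lemma brick_isIso {M : C} (e : CategoryTheory.End M ≃+* k) {f : M ⟶ M}
    (hf : f ≠ 0) : IsIso f := by
  have hne : e f ≠ 0 := fun h => by
    apply hf
    have := e.injective (h.trans (map_zero e).symm)
    simpa using this
  have h1 : IsUnit (e f) := isUnit_iff_ne_zero.mpr hne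
  have hu := h1.map e.symm.toRingHom
  have hfix : e.symm.toRingHom (e f) = f := by simp
  rw [hfix] at hu
  obtain ⟨u, hu⟩ := hu
  refine ⟨u.inv, ?_, ?_⟩
  · show f ≫ u.inv = 𝟙 M
    have : u.inv * u.val = 1 := u.inv_val
    rw [CategoryTheory.End.mul_def] at this
    rw [hu] at this
    exact this
  · show u.inv ≫ f = 𝟙 M
    have : u.val * u.inv = 1 := u.val_inv
    rw [CategoryTheory.End.mul_def] at this
    rw [hu] at this
    exact this

lemma brick_isIso_of_mono {M : C} [HasZeroObject C]
    (e : CategoryTheory.End M ≃+* k) {f : M ⟶ M} [Mono f] : IsIso f := by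
  refine brick_isIso e (fun h0 => ?_)
  have : (𝟙 M) ≫ f = (0 : M ⟶ M) ≫ f := by rw [h0]; simp
  exact brick_id_ne_zero e ((cancel_mono f).mp this)

lemma brick_isIso_of_epi {M : C} [HasZeroObject C]
    (e : CategoryTheory.End M ≃+* k) {f : M ⟶ M} [Epi f] : IsIso f := by
  refine brick_isIso e (fun h0 => ?_)
  have : f ≫ (𝟙 M) = f ≫ (0 : M ⟶ M) := by rw [h0]; simp
  exact brick_id_ne_zero e ((cancel_epi f).mp this)

end BrickAux

/-- Let `M` be a brick (`End(M) ≅ k`) over the full subposet `Q` of `P`.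
Then (1) no proper subobject of `Lan(M)` restricts to a module isomorphic to `M`, and
(2) no proper quotient of `Ran(M)` restricts to a module isomorphic to `M`. -/
theorem lan_ran_brick_proper_subquotient
    (k : Type) [Field k] (P : Type) [PartialOrder P] [Finite P] (Q : Set P)
    (L R : (↥Q ⥤ ModuleCat.{0} k) ⥤ (P ⥤ ModuleCat.{0} k))
    (adjL : L ⊣ resFunctor k Q) (adjR : resFunctor k Q ⊣ R)
    [IsIso adjL.unit] [IsIso adjR.counit]
    (M : ↥Q ⥤ ModuleCat.{0} k) (hfd : PointwiseFinite k M)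
    (hbrick : Nonempty (CategoryTheory.End M ≃+* k)) :
    (∀ (Y : P ⥤ ModuleCat.{0} k) (m : Y ⟶ L.obj M), Mono m → ¬ IsIso m →
      ¬ Nonempty ((resFunctor k Q).obj Y ≅ M)) ∧
    (∀ (Z : P ⥤ ModuleCat.{0} k) (e : R.obj M ⟶ Z), Epi e → ¬ IsIso e →
      ¬ Nonempty ((resFunctor k Q).obj Z ≅ M)) := by
  obtain ⟨eb⟩ := hbrick
  constructor
  · rintro Y m hm hni ⟨φ⟩
    apply hni
    -- the adjunct of φ.inv
    set u : L.obj M ⟶ Y := (adjL.homEquiv M Y).symm φ.inv with hu_def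
    have hu : adjL.unit.app M ≫ (resFunctor k Q).map u = φ.inv := by
      have h := (adjL.homEquiv M Y).apply_symm_apply φ.inv
      rwa [Adjunction.homEquiv_unit] at h
    have hResu : IsIso ((resFunctor k Q).map u) := by
      have : IsIso (adjL.unit.app M ≫ (resFunctor k Q).map u) := by
        rw [hu]; infer_instance
      exact IsIso.of_isIso_comp_left (adjL.unit.app M) _
    -- the endomorphism f with L.map f = u ≫ m
    have FF := adjL.fullyFaithfulLOfIsIsoUnit
    set f : M ⟶ M := FF.preimage (u ≫ m) with hf_def
    have hf : L.map f = u ≫ m := FF.map_preimage _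
    -- f is mono
    haveI : Mono ((resFunctor k Q).map m) := by
      rw [NatTrans.mono_iff_mono_app]
      intro q
      show Mono (m.app _)
      infer_instance
    have hmonoRes : Mono ((resFunctor k Q).map (L.map f)) := by
      rw [hf, Functor.map_comp]
      exact mono_comp _ _
    have hnat : f ≫ adjL.unit.app M
        = adjL.unit.app M ≫ (resFunctor k Q).map (L.map f) :=
      adjL.unit.naturality f
    have hmonof : Mono f := by
      have : Mono (f ≫ adjL.unit.app M) := by
        rw [hnat]; exact mono_comp _ _
      exact mono_of_mono f (adjL.unit.app M)
    have hisof : IsIso f := brick_isIso_of_mono eb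
    have : IsIso (u ≫ m) := by rw [← hf]; infer_instance
    have hepim : Epi m := epi_of_epi u m
    exact isIso_of_mono_of_epi m
  · rintro Z e he hni ⟨φ⟩
    apply hni
    set v : Z ⟶ R.obj M := adjR.homEquiv Z M φ.hom with hv_def
    have hv : (resFunctor k Q).map v ≫ adjR.counit.app M = φ.hom := by
      have h := (adjR.homEquiv Z M).symm_apply_apply φ.hom
      rwa [Adjunction.homEquiv_counit] at h
    have hResv : IsIso ((resFunctor k Q).map v) := by
      have : IsIso ((resFunctor k Q).map v ≫ adjR.counit.app M) := by
        rw [hv]; infer_instance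
      exact IsIso.of_isIso_comp_right _ (adjR.counit.app M)
    have FF := adjR.fullyFaithfulROfIsIsoCounit
    set f : M ⟶ M := FF.preimage (e ≫ v) with hf_def
    have hf : R.map f = e ≫ v := FF.map_preimage _
    haveI : Epi ((resFunctor k Q).map e) := by
      rw [NatTrans.epi_iff_epi_app]
      intro q
      show Epi (e.app _)
      infer_instance
    have hepiRes : Epi ((resFunctor k Q).map (R.map f)) := by
      rw [hf, Functor.map_comp]
      exact epi_comp _ _
    have hnat : (resFunctor k Q).map (R.map f) ≫ adjR.counit.app M
        = adjR.counit.app M ≫ f :=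
      adjR.counit.naturality f
    have hepif : Epi f := by
      have : Epi (adjR.counit.app M ≫ f) := by
        rw [← hnat]; exact epi_comp _ _
      exact epi_of_epi (adjR.counit.app M) f
    have hisof : IsIso f := brick_isIso_of_epi eb
    have : IsIso (e ≫ v) := by rw [← hf]; infer_instance
    have hmonoe : Mono e := mono_of_mono e v
    exact isIso_of_mono_of_epi e
end
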